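/- Suppose n = k² and m = lk + r with 0 ≤ l < k, 0 ≤ r < k, and (k−r)(k−l) ≥ lk. Then every m×n Sudoku rectangle can be completed to an n×n Sudoku square. -/

import Mathlib

/-- `S` (restricted to rows and columns below k²) is a Sudoku square of order
n = k²: entries in {1,…,k²}, and each symbol occurs at most once (hence, the
square being full, exactly once) in each row, each column, and each aligned
k×k block. -/
def IsSudokuSquare (k : ℕ) (S : ℕ → ℕ → ℕ) : Prop :=
  (∀ i < k ^ 2, ∀ j < k ^ 2, S i j ∈ Finset.Icc 1 (k ^ 2)) ∧
  (∀ i < k ^ 2, ∀ j₁ < k ^ 2, ∀ j₂ < k ^ 2, S i j₁ = S i j₂ → j₁ = j₂) ∧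
  (∀ j < k ^ 2, ∀ i₁ < k ^ 2, ∀ i₂ < k ^ 2, S i₁ j = S i₂ j → i₁ = i₂) ∧
  (∀ bi < k, ∀ bj < k, ∀ x₁ < k, ∀ y₁ < k, ∀ x₂ < k, ∀ y₂ < k,
    S (bi * k + x₁) (bj * k + y₁) = S (bi * k + x₂) (bj * k + y₂) → x₁ = x₂ ∧ y₁ = y₂)

/-- `R` (restricted to its first m rows, all columns below k²) is an m×n
Sudoku rectangle for n = k²: the first m rows are filled with entries from
{1,…,k²} satisfying the row, column and block conditions. -/
def IsSudokuRect (k m : ℕ) (R : ℕ → ℕ → ℕ) : Prop :=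
  (∀ i < m, ∀ j < k ^ 2, R i j ∈ Finset.Icc 1 (k ^ 2)) ∧
  (∀ i < m, ∀ j₁ < k ^ 2, ∀ j₂ < k ^ 2, R i j₁ = R i j₂ → j₁ = j₂) ∧
  (∀ j < k ^ 2, ∀ i₁ < m, ∀ i₂ < m, R i₁ j = R i₂ j → i₁ = i₂) ∧
  (∀ bi, ∀ bj < k, ∀ x₁ < k, ∀ y₁ < k, ∀ x₂ < k, ∀ y₂ < k,
    bi * k + x₁ < m → bi * k + x₂ < m →
    R (bi * k + x₁) (bj * k + y₁) = R (bi * k + x₂) (bj * k + y₂) → x₁ = x₂ ∧ y₁ = y₂)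

/-- The Sudoku square `S` is a completion of the m×n Sudoku rectangle `R`. -/
def CompletesTo (k m : ℕ) (R S : ℕ → ℕ → ℕ) : Prop :=
  IsSudokuSquare k S ∧ ∀ i < m, ∀ j < k ^ 2, S i j = R i j


open Finset

section Defs

/-- Symbols occurring in column `c` among the first `m` rows. -/
def histS (m : ℕ) (R : ℕ → ℕ → ℕ) (c : ℕ) : Finset ℕ :=
  (Finset.range m).image (fun i => R i c)

/-- Symbols occurring in the partial block `b` of band `l` (rows `l*k … l*k+r-1`). -/
def blockSymsS (k l r : ℕ) (R : ℕ → ℕ → ℕ) (b : ℕ) : Finset ℕ :=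
  ((Finset.range r) ×ˢ (Finset.range k)).image (fun p => R (l*k+p.1) (b*k+p.2))

/-- Symbols absent from the partial block `b`. -/
def absentS (k l r : ℕ) (R : ℕ → ℕ → ℕ) (b : ℕ) : Finset ℕ :=
  Finset.Icc 1 (k^2) \ blockSymsS k l r R b

/-- Positions `y < k` such that symbol `s` does not occur in column `b*k+y`. -/
def availS (k l r : ℕ) (R : ℕ → ℕ → ℕ) (b s : ℕ) : Finset ℕ :=
  (Finset.range k).filter (fun y => s ∉ histS (l*k+r) R (b*k+y))

end Defs

section Basic

variable {k l r : ℕ} {R : ℕ → ℕ → ℕ}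

lemma cell_lt (hb : l < k) (hx : r < k) : l * k + r < k ^ 2 := by
  have : (l+1) * k ≤ k * k := Nat.mul_le_mul_right k hb
  nlinarith

lemma div_add_mod_lt {c : ℕ} (hk : 0 < k) (hc : c < k ^ 2) : c / k < k ∧ c % k < k := by
  constructor
  · have : c < k * k := by nlinarith [sq_nonneg k]; 
    exact Nat.div_lt_of_lt_mul (by rw [pow_two] at hc; omega)
  · exact Nat.mod_lt _ hk

lemma block_col_div (hb : 0 < k) {b y : ℕ} (hy : y < k) : (b * k + y) / k = b := by
  rw [add_comm, mul_comm, Nat.add_mul_div_left _ _ hb, Nat.div_eq_of_lt hy, zero_add]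

lemma div_mod_decomp (c k : ℕ) : c / k * k + c % k = c := by
  rw [mul_comm]; exact Nat.div_add_mod c k

lemma rowFull (hl : l < k) (hr : r < k) (hR : IsSudokuRect k (l*k+r) R) :
    ∀ i < l*k+r, (Finset.range (k^2)).image (R i) = Finset.Icc 1 (k^2) := by
  intro i hi
  apply Finset.eq_of_subset_of_card_le
  · intro s hs
    obtain ⟨j, hj, rfl⟩ := Finset.mem_image.mp hs
    exact hR.1 i hi j (Finset.mem_range.mp hj)
  · rw [Nat.card_Icc, Finset.card_image_of_injOn, Finset.card_range]
    · omega
    · intro j₁ h₁ j₂ h₂ he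
      exact hR.2.1 i hi j₁ (Finset.mem_range.mp h₁) j₂ (Finset.mem_range.mp h₂) he

end Basic


section Part3
variable {k l r : ℕ} {R : ℕ → ℕ → ℕ}

lemma hist_subset (hR : IsSudokuRect k (l*k+r) R) {c : ℕ} (hc : c < k^2) :
    histS (l*k+r) R c ⊆ Finset.Icc 1 (k^2) := by
  intro s hs
  obtain ⟨i, hi, rfl⟩ := Finset.mem_image.mp hs
  exact hR.1 i (Finset.mem_range.mp hi) c hc

lemma hist_card (hR : IsSudokuRect k (l*k+r) R) {c : ℕ} (hc : c < k^2) :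
    (histS (l*k+r) R c).card = l*k+r := by
  rw [histS, Finset.card_image_of_injOn, Finset.card_range]
  intro i₁ h₁ i₂ h₂ he
  exact hR.2.2.1 c hc i₁ (Finset.mem_range.mp h₁) i₂ (Finset.mem_range.mp h₂) he

lemma mem_hist {m c s : ℕ} : s ∈ histS m R c ↔ ∃ i < m, R i c = s := by
  simp [histS]

lemma mem_blockSyms {b s : ℕ} :
    s ∈ blockSymsS k l r R b ↔ ∃ x < r, ∃ y < k, R (l*k+x) (b*k+y) = s := by
  simp only [blockSymsS, Finset.mem_image, Finset.mem_product, Finset.mem_range, Prod.exists]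
  constructor
  · rintro ⟨x, y, ⟨hx, hy⟩, h⟩; exact ⟨x, hx, y, hy, h⟩
  · rintro ⟨x, hx, y, hy, h⟩; exact ⟨x, y, ⟨hx, hy⟩, h⟩

lemma blockSyms_subset (hl : l < k) (hr : r < k) (hR : IsSudokuRect k (l*k+r) R)
    {b : ℕ} (hb : b < k) : blockSymsS k l r R b ⊆ Finset.Icc 1 (k^2) := by
  intro s hs
  obtain ⟨x, hx, y, hy, rfl⟩ := mem_blockSyms.mp hs
  exact hR.1 _ (by nlinarith) _ (by have := cell_lt hb hy; omega) 

lemma blockSyms_card (hl : l < k) (hr : r < k) (hR : IsSudokuRect k (l*k+r) R)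
    {b : ℕ} (hb : b < k) : (blockSymsS k l r R b).card = r * k := by
  rw [blockSymsS, Finset.card_image_of_injOn]
  · simp [Finset.card_product]
  · rintro ⟨x₁, y₁⟩ h₁ ⟨x₂, y₂⟩ h₂ he
    simp only [Finset.mem_coe, Finset.mem_product, Finset.mem_range] at h₁ h₂
    have := hR.2.2.2 l b hb x₁ (by omega) y₁ h₁.2 x₂ (by omega) y₂ h₂.2
      (by omega) (by omega) he
    simpa [Prod.ext_iff] using this

lemma absent_card (hl : l < k) (hr : r < k) (hR : IsSudokuRect k (l*k+r) R)
    {b : ℕ} (hb : b < k) : (absentS k l r R b).card = k^2 - r*k := by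
  rw [absentS, Finset.card_sdiff_of_subset (blockSyms_subset hl hr hR hb),
    blockSyms_card hl hr hR hb, Nat.card_Icc]
  omega

lemma blocks_count (hl : l < k) (hr : r < k) (hR : IsSudokuRect k (l*k+r) R)
    {s : ℕ} (hs : s ∈ Finset.Icc 1 (k^2)) :
    ((Finset.range k).filter (fun b => s ∈ blockSymsS k l r R b)).card = r := by
  have hk : 0 < k := by omega
  have hex : ∀ x, ∃ j, x < r → (j < k^2 ∧ R (l*k+x) j = s) := by
    intro x
    by_cases hx : x < r
    · have hrow := rowFull hl hr hR (l*k+x) (by omega)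
      have : s ∈ (Finset.range (k^2)).image (R (l*k+x)) := hrow ▸ hs
      obtain ⟨j, hj, hjs⟩ := Finset.mem_image.mp this
      exact ⟨j, fun _ => ⟨Finset.mem_range.mp hj, hjs⟩⟩
    · exact ⟨0, fun h => absurd h hx⟩
  choose colf hcolf using hex
  have himg : (Finset.range k).filter (fun b => s ∈ blockSymsS k l r R b)
      = (Finset.range r).image (fun x => colf x / k) := by
    ext b
    simp only [Finset.mem_filter, Finset.mem_image, Finset.mem_range]
    constructor
    · rintro ⟨hb, hmem⟩
      obtain ⟨x, hx, y, hy, hxy⟩ := mem_blockSyms.mp hmem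
      refine ⟨x, hx, ?_⟩
      have hcol := hcolf x hx
      have : colf x = b*k+y :=
        hR.2.1 (l*k+x) (by omega) _ hcol.1 _ (cell_lt hb hy) (by rw [hcol.2, hxy])
      rw [this, block_col_div hk hy]
    · rintro ⟨x, hx, rfl⟩
      have hcol := hcolf x hx
      have hcb : colf x / k < k := (div_add_mod_lt hk hcol.1).1
      refine ⟨hcb, mem_blockSyms.mpr ⟨x, hx, colf x % k, Nat.mod_lt _ hk, ?_⟩⟩
      rw [div_mod_decomp]
      exact hcol.2
  rw [himg, Finset.card_image_of_injOn, Finset.card_range]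
  intro x₁ h₁ x₂ h₂ he
  simp only [Finset.mem_coe, Finset.mem_range] at h₁ h₂
  dsimp only at he
  have hc₁ := hcolf x₁ h₁
  have hc₂ := hcolf x₂ h₂
  set b := colf x₁ / k with hbdef
  have hyb₁ : colf x₁ = b*k + colf x₁ % k := (div_mod_decomp _ _).symm
  have he' : colf x₁ / k = colf x₂ / k := hbdef.symm.trans he
  have hyb₂ : colf x₂ = b*k + colf x₂ % k := by
    rw [hbdef, he']; exact (div_mod_decomp _ _).symm
  have hb : b < k := (div_add_mod_lt hk hc₁.1).1
  have := hR.2.2.2 l b hb x₁ (by omega) (colf x₁ % k) (Nat.mod_lt _ hk)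
    x₂ (by omega) (colf x₂ % k) (Nat.mod_lt _ hk) (by omega) (by omega)
    (by rw [← hyb₁, ← hyb₂, hc₁.2, hc₂.2])
  exact this.1

lemma avail_lb (hl : l < k) (hr : r < k) (hR : IsSudokuRect k (l*k+r) R)
    {b s : ℕ} (hb : b < k) (hs : s ∈ absentS k l r R b) :
    k - l ≤ (availS k l r R b s).card := by
  classical
  have hk : 0 < k := by omega
  have hsb : s ∉ blockSymsS k l r R b := (Finset.mem_sdiff.mp hs).2
  set occ := (Finset.range k).filter (fun y => s ∈ histS (l*k+r) R (b*k+y)) with hocc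
  have hsplit : (availS k l r R b s).card + occ.card = k := by
    rw [availS, hocc, add_comm,
      Finset.card_filter_add_card_filter_not (p := fun y => s ∈ histS (l*k+r) R (b*k+y)),
      Finset.card_range]
  have hoccl : occ.card ≤ l := by
    have hex : ∀ y, ∃ i, y ∈ occ → (i < l*k ∧ R i (b*k+y) = s) := by
      intro y
      by_cases hy : y ∈ occ
      · rw [hocc, Finset.mem_filter, Finset.mem_range] at hy
        obtain ⟨i, hi, his⟩ := mem_hist.mp hy.2
        refine ⟨i, fun _ => ⟨?_, his⟩⟩
        by_contra hge
        push_neg at hge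
        exact hsb (mem_blockSyms.mpr ⟨i - l*k, by omega, y, hy.1,
          by rw [show l*k + (i - l*k) = i by omega]; exact his⟩)
      · exact ⟨0, fun h => absurd h hy⟩
    choose rowf hrowf using hex
    have : occ.card ≤ (Finset.range l).card := by
      apply Finset.card_le_card_of_injOn (fun y => rowf y / k)
      · intro y hy
        have := (hrowf y hy).1
        rw [Finset.mem_coe, Finset.mem_range]
        exact Nat.div_lt_of_lt_mul (by rw [mul_comm]; exact this)
      · intro y₁ h₁ y₂ h₂ he
        dsimp only at he
        have hy₁ : y₁ < k := by
          have := Finset.mem_filter.mp h₁; exact Finset.mem_range.mp this.1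
        have hy₂ : y₂ < k := by
          have := Finset.mem_filter.mp h₂; exact Finset.mem_range.mp this.1
        have hr₁ := hrowf y₁ h₁
        have hr₂ := hrowf y₂ h₂
        set bi := rowf y₁ / k with hbidef
        have he₁ : rowf y₁ = bi*k + rowf y₁ % k := (div_mod_decomp _ _).symm
        have he' : rowf y₁ / k = rowf y₂ / k := hbidef.symm.trans he
        have he₂ : rowf y₂ = bi*k + rowf y₂ % k := by
          rw [hbidef, he']; exact (div_mod_decomp _ _).symm
        have := hR.2.2.2 bi b hb (rowf y₁ % k) (Nat.mod_lt _ hk) y₁ hy₁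
          (rowf y₂ % k) (Nat.mod_lt _ hk) y₂ hy₂
          (by omega) (by omega)
          (by rw [← he₁, ← he₂, hr₁.2, hr₂.2])
        exact this.2
    simpa using this
  omega

end Part3


lemma card_filter_eq_sum_ite (s : Finset ℕ) (p : ℕ → Prop) [DecidablePred p] :
    (s.filter p).card = ∑ a ∈ s, (if p a then 1 else 0) := by
  rw [Finset.card_eq_sum_ones, Finset.sum_filter]

/-- Double counting edges of a bipartite graph. -/
lemma sum_deg_eq (s U : Finset ℕ) (E : ℕ → Finset ℕ) (hU : ∀ a ∈ s, E a ⊆ U) :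
    ∑ a ∈ s, (E a).card = ∑ b ∈ U, (s.filter (fun a => b ∈ E a)).card := by
  classical
  have h1 : ∀ a ∈ s, (E a).card = ∑ b ∈ U, (if b ∈ E a then 1 else 0) := by
    intro a ha
    have h : E a = U.filter (· ∈ E a) := by
      ext b; simp only [Finset.mem_filter]
      exact ⟨fun hb => ⟨hU a ha hb, hb⟩, fun hb => hb.2⟩
    rw [show (E a).card = (U.filter (· ∈ E a)).card from by rw [← h],
      card_filter_eq_sum_ite]
  rw [Finset.sum_congr rfl h1, Finset.sum_comm]
  exact Finset.sum_congr rfl fun b _ => (card_filter_eq_sum_ite _ _).symm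

/-- A `d`-regular bipartite graph between `A` and `B` (of equal cardinality)
decomposes into `d` perfect matchings. -/
lemma matching_decomp (d : ℕ) (A B : Finset ℕ) (E : ℕ → Finset ℕ)
    (hcard : A.card = B.card)
    (hEB : ∀ a ∈ A, E a ⊆ B)
    (hdeg : ∀ a ∈ A, (E a).card = d)
    (hcodeg : ∀ b ∈ B, (A.filter (fun a => b ∈ E a)).card = d) :
    ∃ σ : ℕ → ℕ → ℕ,
      (∀ x < d, ∀ a ∈ A, σ x a ∈ E a) ∧
      (∀ x < d, Set.InjOn (σ x) A) ∧
      (∀ a ∈ A, ∀ x < d, ∀ y < d, σ x a = σ y a → x = y) := by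
  classical
  induction d generalizing E with
  | zero => exact ⟨fun _ a => a, by omega, by omega, by omega⟩
  | succ d ih =>
    -- find a perfect matching via Hall
    have hall : ∀ s : Finset {a // a ∈ A}, s.card ≤ (s.biUnion fun a => E a.1).card := by
      intro s
      set s' : Finset ℕ := s.image Subtype.val with hs'
      have hs'sub : s' ⊆ A := by
        intro a ha; rw [hs', Finset.mem_image] at ha; obtain ⟨⟨a', ha'⟩, _, rfl⟩ := ha; exact ha'
      have hs'card : s'.card = s.card := Finset.card_image_of_injective _ Subtype.val_injective
      have hUeq : s.biUnion (fun a => E a.1) = s'.biUnion E := by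
        ext b; simp only [Finset.mem_biUnion, hs', Finset.mem_image]
        constructor
        · rintro ⟨a, ha, hb⟩; exact ⟨a.1, ⟨a, ha, rfl⟩, hb⟩
        · rintro ⟨a, ⟨a', ha', rfl⟩, hb⟩; exact ⟨a', ha', hb⟩
      rw [hUeq, ← hs'card]
      have key : s'.card * (d+1) ≤ (s'.biUnion E).card * (d+1) := by
        have h1 : ∑ a ∈ s', (E a).card = s'.card * (d+1) := by
          rw [Finset.sum_congr rfl (fun a ha => hdeg a (hs'sub ha))]
          simp [mul_comm]
        have h2 : ∑ a ∈ s', (E a).card = ∑ b ∈ s'.biUnion E, (s'.filter (fun a => b ∈ E a)).card :=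
          sum_deg_eq s' (s'.biUnion E) E (fun a ha => Finset.subset_biUnion_of_mem E ha)
        have h3 : ∑ b ∈ s'.biUnion E, (s'.filter (fun a => b ∈ E a)).card
            ≤ (s'.biUnion E).card * (d+1) := by
          rw [← smul_eq_mul, ← Finset.sum_const]
          refine Finset.sum_le_sum fun b hb => ?_
          calc (s'.filter (fun a => b ∈ E a)).card
              ≤ (A.filter (fun a => b ∈ E a)).card :=
                Finset.card_le_card (Finset.filter_subset_filter _ hs'sub)
            _ = d + 1 := by
                obtain ⟨a, ha, hba⟩ := Finset.mem_biUnion.mp hb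
                exact hcodeg b (hEB a (hs'sub ha) hba)
        omega
      exact Nat.le_of_mul_le_mul_right key (by omega)
    obtain ⟨f, hfinj, hfmem⟩ :=
      (Finset.all_card_le_biUnion_card_iff_exists_injective (fun a : {a // a ∈ A} => E a.1)).mp hall
    -- extend the matching to a function on ℕ
    set g : ℕ → ℕ := fun a => if h : a ∈ A then f ⟨a, h⟩ else a with hg
    have hgeq : ∀ a (ha : a ∈ A), g a = f ⟨a, ha⟩ := fun a ha => dif_pos ha
    have hgmem : ∀ a ∈ A, g a ∈ E a := fun a ha => by rw [hgeq a ha]; exact hfmem ⟨a, ha⟩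
    have hginj : Set.InjOn g A := by
      intro a ha a' ha' h
      rw [hgeq a ha, hgeq a' ha'] at h
      exact congrArg Subtype.val (hfinj h)
    have hgsurj : ∀ b ∈ B, ∃ a ∈ A, g a = b := by
      intro b hb
      have himg : A.image g = B := by
        apply Finset.eq_of_subset_of_card_le
        · intro b' hb'; obtain ⟨a, ha, rfl⟩ := Finset.mem_image.mp hb'; exact hEB a ha (hgmem a ha)
        · rw [Finset.card_image_of_injOn hginj, hcard]
      have := himg ▸ hb
      obtain ⟨a, ha, h⟩ := Finset.mem_image.mp this
      exact ⟨a, ha, h⟩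
    -- remove the matching
    set E' : ℕ → Finset ℕ := fun a => (E a).erase (g a) with hE'
    have hE'B : ∀ a ∈ A, E' a ⊆ B := fun a ha => (Finset.erase_subset _ _).trans (hEB a ha)
    have hE'deg : ∀ a ∈ A, (E' a).card = d := by
      intro a ha; rw [hE']; rw [Finset.card_erase_of_mem (hgmem a ha), hdeg a ha]; rfl
    have hE'codeg : ∀ b ∈ B, (A.filter (fun a => b ∈ E' a)).card = d := by
      intro b hb
      obtain ⟨a₀, ha₀, hga₀⟩ := hgsurj b hb
      have hsplit : A.filter (fun a => b ∈ E a) = insert a₀ (A.filter (fun a => b ∈ E' a)) := by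
        ext a
        simp only [Finset.mem_insert, Finset.mem_filter, hE', Finset.mem_erase]
        constructor
        · rintro ⟨ha, hbe⟩
          by_cases h : a = a₀
          · exact Or.inl h
          · refine Or.inr ⟨ha, ?_, hbe⟩
            intro hbg
            exact h (hginj ha ha₀ (hbg.symm.trans hga₀.symm))
        · rintro (rfl | ⟨ha, _, hbe⟩)
          · exact ⟨ha₀, hga₀ ▸ hgmem _ ha₀⟩
          · exact ⟨ha, hbe⟩
      have hnotmem : a₀ ∉ A.filter (fun a => b ∈ E' a) := by
        simp only [Finset.mem_filter, hE', Finset.mem_erase]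
        rintro ⟨-, hne, -⟩; exact hne hga₀.symm
      have := hcodeg b hb
      rw [hsplit, Finset.card_insert_of_notMem hnotmem] at this
      omega
    obtain ⟨σ', h1, h2, h3⟩ := ih E' hE'B hE'deg hE'codeg
    refine ⟨fun x => if x = d then g else σ' x, ?_, ?_, ?_⟩
    · intro x hx a ha
      by_cases h : x = d
      · simp only [h, if_pos rfl]; exact hgmem a ha
      · simp only [if_neg h]
        exact (Finset.erase_subset _ _) (h1 x (by omega) a ha)
    · intro x hx
      by_cases h : x = d
      · simp only [h, if_pos rfl]; exact hginj
      · simp only [if_neg h]; exact h2 x (by omega)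
    · intro a ha x hx y hy hxy
      by_cases h : x = d <;> by_cases h' : y = d
      · omega
      · exfalso
        simp only [h, if_pos rfl, if_neg h'] at hxy
        have := h1 y (by omega) a ha
        rw [← hxy] at this
        exact (Finset.notMem_erase _ _) this
      · exfalso
        simp only [h', if_pos rfl, if_neg h] at hxy
        have := h1 x (by omega) a ha
        rw [hxy] at this
        exact (Finset.notMem_erase _ _) this
      · simp only [if_neg h, if_neg h'] at hxy
        exact h3 a ha x (by omega) y (by omega) hxy

section Part4
open Finset
variable {k l r : ℕ} {R : ℕ → ℕ → ℕ}

lemma avail_subset_range {b s : ℕ} : availS k l r R b s ⊆ Finset.range k :=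
  Finset.filter_subset _ _

lemma sq_eq (k : ℕ) : k^2 = k*k := sq k

lemma hallA (hl : l < k) (hr : r < k) (hineq : l*k ≤ (k-r)*(k-l))
    (hR : IsSudokuRect k (l*k+r) R) {b : ℕ} (hb : b < k) :
    ∀ S ⊆ absentS k l r R b, S.card ≤ (k-r) * (S.biUnion (availS k l r R b)).card := by
  classical
  intro S hS
  rcases S.eq_empty_or_nonempty with rfl | ⟨s₀, hs₀⟩
  · simp
  set N := S.biUnion (availS k l r R b) with hN
  have hNsub : N ⊆ Finset.range k := by
    intro y hy
    obtain ⟨s, _, hys⟩ := Finset.mem_biUnion.mp hy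
    exact avail_subset_range hys
  by_cases hNall : N = Finset.range k
  · rw [hNall, Finset.card_range]
    calc S.card ≤ (absentS k l r R b).card := Finset.card_le_card hS
      _ = k^2 - r*k := absent_card hl hr hR hb
      _ ≤ (k-r)*k := by
          have h1 : (k-r)*k = k*k - r*k := Nat.sub_mul k r k
          have h2 := sq_eq k
          omega
  · obtain ⟨y₀, hy₀k, hy₀N⟩ : ∃ y₀ ∈ Finset.range k, y₀ ∉ N := by
      by_contra hcon
      push_neg at hcon
      exact hNall (Finset.Subset.antisymm hNsub hcon)
    have hScol : S ⊆ (Finset.range (l*k)).image (fun i => R i (b*k+y₀)) := by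
      intro s hs
      have hsab := hS hs
      have hsav : y₀ ∉ availS k l r R b s := fun hy =>
        hy₀N (Finset.mem_biUnion.mpr ⟨s, hs, hy⟩)
      have hsh : s ∈ histS (l*k+r) R (b*k+y₀) := by
        by_contra hnot
        exact hsav (Finset.mem_filter.mpr ⟨hy₀k, hnot⟩)
      obtain ⟨i, hi, his⟩ := mem_hist.mp hsh
      have hilt : i < l*k := by
        by_contra hge
        push_neg at hge
        exact (Finset.mem_sdiff.mp hsab).2 (mem_blockSyms.mpr
          ⟨i - l*k, by omega, y₀, Finset.mem_range.mp hy₀k,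
            by rw [show l*k + (i - l*k) = i by omega]; exact his⟩)
      exact Finset.mem_image.mpr ⟨i, Finset.mem_range.mpr hilt, his⟩
    have hSlk : S.card ≤ l*k := by
      calc S.card ≤ _ := Finset.card_le_card hScol
        _ ≤ (Finset.range (l*k)).card := Finset.card_image_le
        _ = l*k := Finset.card_range _
    have hNge : k - l ≤ N.card := by
      calc k - l ≤ (availS k l r R b s₀).card := avail_lb hl hr hR hb (hS hs₀)
        _ ≤ N.card := Finset.card_le_card (Finset.subset_biUnion_of_mem _ hs₀)
    calc S.card ≤ l*k := hSlk
      _ ≤ (k-r)*(k-l) := hineq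
      _ ≤ (k-r)*N.card := Nat.mul_le_mul_left _ hNge

lemma hallB (hl : l < k) (hR : IsSudokuRect k (l*k+0) R) {b : ℕ} (hb : b < k) :
    ∀ S ⊆ absentS k l 0 R b, S.card ≤ (k-0) * (S.biUnion (availS k l 0 R b)).card := by
  classical
  intro S hS
  set N := S.biUnion (availS k l 0 R b) with hN
  have hNsub : N ⊆ Finset.range k := by
    intro y hy
    obtain ⟨s, _, hys⟩ := Finset.mem_biUnion.mp hy
    exact avail_subset_range hys
  have hsum : ∑ s ∈ S, (availS k l 0 R b s).card
      = ∑ y ∈ Finset.range k, (S.filter (fun s => y ∈ availS k l 0 R b s)).card :=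
    sum_deg_eq S (Finset.range k) _ (fun s _ => avail_subset_range)
  have hrestrict : ∑ y ∈ Finset.range k, (S.filter (fun s => y ∈ availS k l 0 R b s)).card
      = ∑ y ∈ N, (S.filter (fun s => y ∈ availS k l 0 R b s)).card := by
    symm
    apply Finset.sum_subset hNsub
    intro y _ hyN
    rw [Finset.card_eq_zero, Finset.filter_eq_empty_iff]
    intro s hs hyav
    exact hyN (Finset.mem_biUnion.mpr ⟨s, hs, hyav⟩)
  have hterm : ∀ y ∈ N, (S.filter (fun s => y ∈ availS k l 0 R b s)).card ≤ k^2 - l*k := by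
    intro y hyN
    have hyk : y < k := Finset.mem_range.mp (hNsub hyN)
    have hc : b*k+y < k^2 := cell_lt hb hyk
    calc (S.filter (fun s => y ∈ availS k l 0 R b s)).card
        ≤ (Finset.Icc 1 (k^2) \ histS (l*k+0) R (b*k+y)).card := by
          apply Finset.card_le_card
          intro s hsf
          obtain ⟨hsS, hyav⟩ := Finset.mem_filter.mp hsf
          refine Finset.mem_sdiff.mpr ⟨(Finset.mem_sdiff.mp (hS hsS)).1, ?_⟩
          exact (Finset.mem_filter.mp hyav).2
      _ = k^2 - l*k := by
          rw [Finset.card_sdiff_of_subset (hist_subset hR hc), hist_card hR hc, Nat.card_Icc]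
          omega
  have hlb : (k-l) * S.card ≤ ∑ s ∈ S, (availS k l 0 R b s).card := by
    have := Finset.sum_le_sum (f := fun _ : ℕ => k - l) (g := fun s => (availS k l 0 R b s).card)
      (fun s hs => avail_lb hl (by omega) hR hb (hS hs))
    simpa [Finset.sum_const, mul_comm] using this
  have hub : ∑ y ∈ N, (S.filter (fun s => y ∈ availS k l 0 R b s)).card
      ≤ N.card * (k^2 - l*k) := by
    rw [← smul_eq_mul, ← Finset.sum_const]
    exact Finset.sum_le_sum hterm
  have hkl : k^2 - l*k = (k-l)*k := by
    have h1 : (k-l)*k = k*k - l*k := Nat.sub_mul k l k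
    have h2 := sq_eq k
    omega
  have : (k-l) * S.card ≤ (k-l) * (k * N.card) := by
    calc (k-l) * S.card ≤ ∑ s ∈ S, (availS k l 0 R b s).card := hlb
      _ = ∑ y ∈ Finset.range k, (S.filter (fun s => y ∈ availS k l 0 R b s)).card := hsum
      _ = ∑ y ∈ N, (S.filter (fun s => y ∈ availS k l 0 R b s)).card := hrestrict
      _ ≤ N.card * (k^2 - l*k) := hub
      _ = (k-l) * (k * N.card) := by rw [hkl]; ring
  have hklpos : 0 < k - l := by omega
  have hfin : S.card ≤ k * N.card := Nat.le_of_mul_le_mul_left this hklpos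
  simpa using hfin

/-- From the Hall condition, get an assignment of absent symbols to columns
within block column `b`, each column receiving exactly `k - r` symbols. -/
lemma assign_exists (hl : l < k) (hr : r < k) (hR : IsSudokuRect k (l*k+r) R)
    {b : ℕ} (hb : b < k)
    (hHall : ∀ S ⊆ absentS k l r R b, S.card ≤ (k-r) * (S.biUnion (availS k l r R b)).card) :
    ∃ g : ℕ → ℕ, (∀ s ∈ absentS k l r R b, g s ∈ availS k l r R b s) ∧
      (∀ y < k, ((absentS k l r R b).filter (fun s => g s = y)).card = k - r) := by
  classical
  set A := absentS k l r R b with hA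
  set t : {s // s ∈ A} → Finset (ℕ × ℕ) :=
    fun s => (availS k l r R b s.1) ×ˢ (Finset.range (k-r)) with ht
  have hall : ∀ sub : Finset {s // s ∈ A}, sub.card ≤ (sub.biUnion t).card := by
    intro sub
    set sub' : Finset ℕ := sub.image Subtype.val with hsub'
    have hsub'A : sub' ⊆ A := by
      intro a ha; rw [hsub', Finset.mem_image] at ha
      obtain ⟨⟨a', ha'⟩, _, rfl⟩ := ha; exact ha'
    have hcard : sub'.card = sub.card := Finset.card_image_of_injective _ Subtype.val_injective
    have hU : sub.biUnion t = (sub'.biUnion (availS k l r R b)) ×ˢ (Finset.range (k-r)) := by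
      ext p
      simp only [Finset.mem_biUnion, ht, Finset.mem_product, hsub', Finset.mem_image]
      constructor
      · rintro ⟨s, hs, hp1, hp2⟩; exact ⟨⟨s.1, ⟨s, hs, rfl⟩, hp1⟩, hp2⟩
      · rintro ⟨⟨s, ⟨s', hs', rfl⟩, hp1⟩, hp2⟩; exact ⟨s', hs', hp1, hp2⟩
    rw [hU, Finset.card_product, Finset.card_range, ← hcard]
    calc sub'.card ≤ (k-r) * (sub'.biUnion (availS k l r R b)).card := hHall sub' hsub'A
      _ = (sub'.biUnion (availS k l r R b)).card * (k-r) := mul_comm _ _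
  obtain ⟨f, hfinj, hfmem⟩ := (Finset.all_card_le_biUnion_card_iff_exists_injective t).mp hall
  set g : ℕ → ℕ := fun s => if h : s ∈ A then (f ⟨s, h⟩).1 else 0 with hg
  have hgeq : ∀ s (hs : s ∈ A), g s = (f ⟨s, hs⟩).1 := fun s hs => dif_pos hs
  have hgmem : ∀ s ∈ A, g s ∈ availS k l r R b s := by
    intro s hs
    rw [hgeq s hs]
    exact (Finset.mem_product.mp (hfmem ⟨s, hs⟩)).1
  set g2 : ℕ → ℕ := fun s => if h : s ∈ A then (f ⟨s, h⟩).2 else 0 with hg2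
  have hg2eq : ∀ s (hs : s ∈ A), g2 s = (f ⟨s, hs⟩).2 := fun s hs => dif_pos hs
  have hfibers_le : ∀ y, (A.filter (fun s => g s = y)).card ≤ k - r := by
    intro y
    calc (A.filter (fun s => g s = y)).card ≤ (Finset.range (k-r)).card := by
          apply Finset.card_le_card_of_injOn g2
          · intro s hs
            have hsA := (Finset.mem_filter.mp hs).1
            rw [hg2eq s hsA]
            exact Finset.mem_range.mpr (Finset.mem_range.mp
              (Finset.mem_product.mp (hfmem ⟨s, hsA⟩)).2)
          · intro s₁ h₁ s₂ h₂ he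
            have hA₁ := (Finset.mem_filter.mp h₁).1
            have hA₂ := (Finset.mem_filter.mp h₂).1
            have hy₁ := (Finset.mem_filter.mp h₁).2
            have hy₂ := (Finset.mem_filter.mp h₂).2
            rw [hg2eq s₁ hA₁, hg2eq s₂ hA₂] at he
            rw [hgeq s₁ hA₁] at hy₁
            rw [hgeq s₂ hA₂] at hy₂
            have : f ⟨s₁, hA₁⟩ = f ⟨s₂, hA₂⟩ := Prod.ext (hy₁.trans hy₂.symm) he
            exact congrArg Subtype.val (hfinj this)
      _ = k - r := Finset.card_range _
  have htotal : ∑ y ∈ Finset.range k, (A.filter (fun s => g s = y)).card = A.card :=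
    (Finset.card_eq_sum_card_fiberwise (fun s hs =>
      avail_subset_range (hgmem s hs))).symm
  have hAcard : A.card = (k-r)*k := by
    rw [hA, absent_card hl hr hR hb]
    have h1 : (k-r)*k = k*k - r*k := Nat.sub_mul k r k
    have h2 := sq_eq k
    omega
  refine ⟨g, hgmem, fun y hy => ?_⟩
  by_contra hne
  have hlt : (A.filter (fun s => g s = y)).card < k - r :=
    lt_of_le_of_ne (hfibers_le y) hne
  have : ∑ y' ∈ Finset.range k, (A.filter (fun s => g s = y')).card
      < ∑ _y' ∈ Finset.range k, (k-r) := by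
    apply Finset.sum_lt_sum (fun i _ => hfibers_le i)
    exact ⟨y, Finset.mem_range.mpr hy, hlt⟩
  rw [Finset.sum_const, Finset.card_range, smul_eq_mul, htotal, hAcard,
    mul_comm (k-r) k] at this
  exact lt_irrefl _ this
end Part4

section Part5
open Finset
variable {k l r : ℕ} {R : ℕ → ℕ → ℕ}

lemma block_col_mod {b y : ℕ} (hk : 0 < k) (hy : y < k) : (b * k + y) % k = y := by
  rw [add_comm, Nat.add_mul_mod_self_right, Nat.mod_eq_of_lt hy]

lemma extend_band (hl : l < k) (hr : r < k) (hR : IsSudokuRect k (l*k+r) R)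
    (hHall : ∀ b < k, ∀ S ⊆ absentS k l r R b,
      S.card ≤ (k-r) * (S.biUnion (availS k l r R b)).card) :
    ∃ R' : ℕ → ℕ → ℕ, IsSudokuRect k ((l+1)*k) R' ∧ ∀ i < l*k+r, ∀ j, R' i j = R i j := by
  classical
  have hk : 0 < k := by omega
  set m := l*k+r with hm
  -- Step 1: column assignments in each block
  have hasg : ∀ b, ∃ g : ℕ → ℕ, b < k →
      (∀ s ∈ absentS k l r R b, g s ∈ availS k l r R b s) ∧
      (∀ y < k, ((absentS k l r R b).filter (fun s => g s = y)).card = k - r) := by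
    intro b
    by_cases hb : b < k
    · obtain ⟨g, h1, h2⟩ := assign_exists hl hr hR hb (hHall b hb)
      exact ⟨g, fun _ => ⟨h1, h2⟩⟩
    · exact ⟨fun _ => 0, fun h => absurd h hb⟩
  choose gs hgs using hasg
  -- Step 2: the bipartite graph of new positions
  set E : ℕ → Finset ℕ := fun s =>
    (Finset.range k).biUnion (fun b => if s ∈ absentS k l r R b then {b*k + gs b s} else ∅)
    with hE
  have hmemE : ∀ s c, c ∈ E s ↔ ∃ b < k, s ∈ absentS k l r R b ∧ c = b*k + gs b s := by
    intro s c
    simp only [hE, Finset.mem_biUnion, Finset.mem_range]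
    constructor
    · rintro ⟨b, hb, hc⟩
      rw [apply_ite (c ∈ ·)] at hc
      by_cases habs : s ∈ absentS k l r R b
      · rw [if_pos habs] at hc
        exact ⟨b, hb, habs, Finset.mem_singleton.mp hc⟩
      · rw [if_neg habs] at hc; exact absurd hc (Finset.notMem_empty c)
    · rintro ⟨b, hb, habs, rfl⟩
      exact ⟨b, hb, by rw [if_pos habs]; exact Finset.mem_singleton_self _⟩
  have hgslt : ∀ b < k, ∀ s ∈ absentS k l r R b, gs b s < k := by
    intro b hb s hs
    exact Finset.mem_range.mp (avail_subset_range ((hgs b hb).1 s hs))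
  -- P1
  have hP1 : ∀ s c, c ∈ E s →
      c < k^2 ∧ s ∉ histS m R c ∧ s ∈ absentS k l r R (c/k) ∧ c/k < k := by
    intro s c hc
    obtain ⟨b, hb, habs, rfl⟩ := (hmemE s c).mp hc
    have hglt : gs b s < k := hgslt b hb s habs
    have hav := (hgs b hb).1 s habs
    have hnh : s ∉ histS m R (b*k + gs b s) := (Finset.mem_filter.mp hav).2
    have hdiv : (b*k + gs b s)/k = b := block_col_div hk hglt
    exact ⟨cell_lt hb hglt, hnh, by rw [hdiv]; exact habs, by rw [hdiv]; exact hb⟩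
  have hEsub : ∀ s, E s ⊆ Finset.range (k^2) := fun s c hc =>
    Finset.mem_range.mpr (hP1 s c hc).1
  -- P3 : degrees
  have hdeg : ∀ s ∈ Finset.Icc 1 (k^2), (E s).card = k - r := by
    intro s hs
    have hEeq : E s = ((Finset.range k).filter (fun b => s ∈ absentS k l r R b)).image
        (fun b => b*k + gs b s) := by
      ext c
      rw [hmemE]
      simp only [Finset.mem_image, Finset.mem_filter, Finset.mem_range]
      constructor
      · rintro ⟨b, hb, habs, rfl⟩; exact ⟨b, ⟨hb, habs⟩, rfl⟩
      · rintro ⟨b, ⟨hb, habs⟩, rfl⟩; exact ⟨b, hb, habs, rfl⟩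
    rw [hEeq, Finset.card_image_of_injOn]
    · have hsplit : (Finset.range k).filter (fun b => s ∈ absentS k l r R b)
          = Finset.range k \ (Finset.range k).filter (fun b => s ∈ blockSymsS k l r R b) := by
        ext b
        simp only [Finset.mem_filter, Finset.mem_sdiff, Finset.mem_range, absentS,
          Finset.mem_sdiff]
        constructor
        · rintro ⟨hb, _, hnb⟩; exact ⟨hb, fun h => hnb h.2⟩
        · rintro ⟨hb, hnb⟩; exact ⟨hb, hs, fun h => hnb ⟨hb, h⟩⟩
      rw [hsplit, Finset.card_sdiff_of_subset (Finset.filter_subset _ _), Finset.card_range,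
        blocks_count hl hr hR hs]
    · intro b₁ h₁ b₂ h₂ he
      simp only [Finset.mem_coe, Finset.mem_filter, Finset.mem_range] at h₁ h₂
      dsimp only at he
      have e₁ : (b₁*k + gs b₁ s)/k = b₁ := block_col_div hk (hgslt b₁ h₁.1 s h₁.2)
      have e₂ : (b₂*k + gs b₂ s)/k = b₂ := block_col_div hk (hgslt b₂ h₂.1 s h₂.2)
      rw [← e₁, ← e₂, he]
  -- P4 : codegrees
  have hcodeg : ∀ c ∈ Finset.range (k^2),
      ((Finset.Icc 1 (k^2)).filter (fun s => c ∈ E s)).card = k - r := by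
    intro c hc
    have hck : c < k^2 := Finset.mem_range.mp hc
    set b := c / k with hb
    set y := c % k with hy
    have hbk : b < k := (div_add_mod_lt hk hck).1
    have hyk : y < k := (div_add_mod_lt hk hck).2
    have hcby : c = b*k + y := (div_mod_decomp c k).symm
    have hfeq : (Finset.Icc 1 (k^2)).filter (fun s => c ∈ E s)
        = (absentS k l r R b).filter (fun s => gs b s = y) := by
      ext s
      simp only [Finset.mem_filter]
      constructor
      · rintro ⟨hsI, hcE⟩
        obtain ⟨b', hb', habs, hceq⟩ := (hmemE s c).mp hcE
        have hglt : gs b' s < k := hgslt b' hb' s habs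
        have : b' = b := by rw [hb, hceq, block_col_div hk hglt]
        subst this
        refine ⟨habs, ?_⟩
        rw [hy, hceq, block_col_mod hk hglt]
      · rintro ⟨habs, hgy⟩
        refine ⟨(Finset.mem_sdiff.mp habs).1, (hmemE s c).mpr ⟨b, hbk, habs, ?_⟩⟩
        rw [hgy, ← hcby]
    rw [hfeq]
    exact (hgs b hbk).2 y hyk
  -- Step 3: decompose into matchings
  have hcards : (Finset.Icc 1 (k^2)).card = (Finset.range (k^2)).card := by
    rw [Nat.card_Icc, Finset.card_range]; omega
  obtain ⟨σ, hσmem, hσinj, hσcol⟩ := matching_decomp (k-r) (Finset.Icc 1 (k^2))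
    (Finset.range (k^2)) E hcards (fun a _ => hEsub a) hdeg hcodeg
  -- surjectivity of each matching
  have hσsurj : ∀ x < k-r, ∀ c < k^2, ∃ s ∈ Finset.Icc 1 (k^2), σ x s = c := by
    intro x hx c hc
    have himg : (Finset.Icc 1 (k^2)).image (σ x) = Finset.range (k^2) := by
      apply Finset.eq_of_subset_of_card_le
      · intro c' hc'
        obtain ⟨s, hs, rfl⟩ := Finset.mem_image.mp hc'
        exact hEsub s (hσmem x hx s hs)
      · rw [Finset.card_image_of_injOn (hσinj x hx), hcards]
    have := himg ▸ Finset.mem_range.mpr hc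
    obtain ⟨s, hs, hsc⟩ := Finset.mem_image.mp this
    exact ⟨s, hs, hsc⟩
  -- Step 4: define the extension
  set R' : ℕ → ℕ → ℕ := fun i j =>
    if i < m then R i j else Function.invFunOn (σ (i - m)) ↑(Finset.Icc 1 (k^2)) j with hR'
  have hR'old : ∀ i, i < m → ∀ j, R' i j = R i j := by
    intro i hi j; rw [hR']; simp only [if_pos hi]
  have hxlt : ∀ i, m ≤ i → i < (l+1)*k → i - m < k - r := by
    intro i h1 h2
    have : (l+1)*k = l*k + k := by ring
    omega
  -- properties of new rows
  have hnew : ∀ i, m ≤ i → i < (l+1)*k → ∀ j < k^2,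
      R' i j ∈ Finset.Icc 1 (k^2) ∧ σ (i-m) (R' i j) = j := by
    intro i h1 h2 j hj
    have hx := hxlt i h1 h2
    have hex : ∃ s ∈ ↑(Finset.Icc 1 (k^2)), σ (i-m) s = j := by
      obtain ⟨s, hs, hsj⟩ := hσsurj (i-m) hx j hj
      exact ⟨s, Finset.mem_coe.mpr hs, hsj⟩
    have hval : R' i j = Function.invFunOn (σ (i - m)) ↑(Finset.Icc 1 (k^2)) j := by
      rw [hR']; simp only [if_neg (by omega : ¬ i < m)]
    constructor
    · rw [hval]; exact Finset.mem_coe.mp (Function.invFunOn_mem hex)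
    · rw [hval]; exact Function.invFunOn_eq hex
  refine ⟨R', ⟨?_, ?_, ?_, ?_⟩, fun i hi j => hR'old i hi j⟩
  -- entries
  · intro i hi j hj
    by_cases him : i < m
    · rw [hR'old i him]; exact hR.1 i him j hj
    · exact (hnew i (by omega) hi j hj).1
  -- rows
  · intro i hi j₁ hj₁ j₂ hj₂ he
    by_cases him : i < m
    · rw [hR'old i him, hR'old i him] at he
      exact hR.2.1 i him j₁ hj₁ j₂ hj₂ he
    · have h1 := (hnew i (by omega) hi j₁ hj₁).2
      have h2 := (hnew i (by omega) hi j₂ hj₂).2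
      rw [← h1, ← h2, he]
  -- columns
  · intro j hj i₁ hi₁ i₂ hi₂ he
    by_cases h1 : i₁ < m <;> by_cases h2 : i₂ < m
    · rw [hR'old i₁ h1, hR'old i₂ h2] at he
      exact hR.2.2.1 j hj i₁ h1 i₂ h2 he
    · -- i₁ old, i₂ new : contradiction
      exfalso
      have hn := hnew i₂ (by omega) hi₂ j hj
      have hsA : R' i₂ j ∈ Finset.Icc 1 (k^2) := hn.1
      have hjE : j ∈ E (R' i₂ j) := by
        have := hσmem (i₂-m) (hxlt i₂ (by omega) hi₂) (R' i₂ j) hsA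
        rw [hn.2] at this; exact this
      have hnh : R' i₂ j ∉ histS m R j := (hP1 _ j hjE).2.1
      apply hnh
      rw [hR'old i₁ h1] at he
      exact mem_hist.mpr ⟨i₁, h1, he⟩
    · -- i₁ new, i₂ old
      exfalso
      have hn := hnew i₁ (by omega) hi₁ j hj
      have hsA : R' i₁ j ∈ Finset.Icc 1 (k^2) := hn.1
      have hjE : j ∈ E (R' i₁ j) := by
        have := hσmem (i₁-m) (hxlt i₁ (by omega) hi₁) (R' i₁ j) hsA
        rw [hn.2] at this; exact this
      have hnh : R' i₁ j ∉ histS m R j := (hP1 _ j hjE).2.1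
      apply hnh
      rw [hR'old i₂ h2] at he
      exact mem_hist.mpr ⟨i₂, h2, he.symm⟩
    · -- both new
      have hn₁ := hnew i₁ (by omega) hi₁ j hj
      have hn₂ := hnew i₂ (by omega) hi₂ j hj
      have hx₁ := hxlt i₁ (by omega) hi₁
      have hx₂ := hxlt i₂ (by omega) hi₂
      have : σ (i₁-m) (R' i₁ j) = σ (i₂-m) (R' i₁ j) := by
        rw [hn₁.2, he, hn₂.2]
      have := hσcol (R' i₁ j) hn₁.1 (i₁-m) hx₁ (i₂-m) hx₂ this
      omega
  -- blocks
  · intro bi bj hbj x₁ hx₁ y₁ hy₁ x₂ hx₂ y₂ hy₂ hr₁ hr₂ he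
    have hbil : bi ≤ l := by
      by_contra hgt
      push_neg at hgt
      have : (l+1)*k ≤ bi*k := Nat.mul_le_mul_right k hgt
      omega
    have hc₁ : bj*k+y₁ < k^2 := cell_lt hbj hy₁
    have hc₂ : bj*k+y₂ < k^2 := cell_lt hbj hy₂
    rcases Nat.lt_or_ge bi l with hlt | hge
    · -- rows in a full band, below m
      have hm₁ : bi*k+x₁ < m := by
        have : (bi+1)*k ≤ l*k := Nat.mul_le_mul_right k (by omega)
        rw [hm]; nlinarith
      have hm₂ : bi*k+x₂ < m := by
        have : (bi+1)*k ≤ l*k := Nat.mul_le_mul_right k (by omega)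
        rw [hm]; nlinarith
      rw [hR'old _ hm₁, hR'old _ hm₂] at he
      exact hR.2.2.2 bi bj hbj x₁ hx₁ y₁ hy₁ x₂ hx₂ y₂ hy₂ hm₁ hm₂ he
    · have hbieq : bi = l := by omega
      have hmbi : m = bi*k + r := by rw [hm, hbieq]
      have hrow : ∀ x, x < k → (bi*k + x < m ↔ x < r) := by
        intro x hx; rw [hmbi]; omega
      by_cases hxr₁ : x₁ < r <;> by_cases hxr₂ : x₂ < r
      · -- both old
        have hm₁ : bi*k+x₁ < m := (hrow x₁ hx₁).mpr hxr₁
        have hm₂ : bi*k+x₂ < m := (hrow x₂ hx₂).mpr hxr₂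
        rw [hR'old _ hm₁, hR'old _ hm₂] at he
        exact hR.2.2.2 bi bj hbj x₁ hx₁ y₁ hy₁ x₂ hx₂ y₂ hy₂ hm₁ hm₂ he
      · -- x₁ old, x₂ new : contradiction
        exfalso
        have hm₁ : bi*k+x₁ < m := (hrow x₁ hx₁).mpr hxr₁
        have hm₂ : ¬ bi*k+x₂ < m := fun h => hxr₂ ((hrow x₂ hx₂).mp h)
        have hn₂ := hnew (bi*k+x₂) (by omega) hr₂ (bj*k+y₂) hc₂
        have hjE : bj*k+y₂ ∈ E (R' (bi*k+x₂) (bj*k+y₂)) := by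
          have := hσmem ((bi*k+x₂)-m) (hxlt _ (by omega) hr₂) _ hn₂.1
          rw [hn₂.2] at this; exact this
        have habs := (hP1 _ _ hjE).2.2.1
        rw [block_col_div hk hy₂] at habs
        have hblk : R' (bi*k+x₂) (bj*k+y₂) ∈ blockSymsS k l r R bj := by
          rw [← he, hR'old _ hm₁]
          exact mem_blockSyms.mpr ⟨x₁, hxr₁, y₁, hy₁, by rw [hbieq]⟩
        exact (Finset.mem_sdiff.mp habs).2 hblk
      · -- x₁ new, x₂ old : contradiction
        exfalso
        have hm₂ : bi*k+x₂ < m := (hrow x₂ hx₂).mpr hxr₂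
        have hm₁ : ¬ bi*k+x₁ < m := fun h => hxr₁ ((hrow x₁ hx₁).mp h)
        have hn₁ := hnew (bi*k+x₁) (by omega) hr₁ (bj*k+y₁) hc₁
        have hjE : bj*k+y₁ ∈ E (R' (bi*k+x₁) (bj*k+y₁)) := by
          have := hσmem ((bi*k+x₁)-m) (hxlt _ (by omega) hr₁) _ hn₁.1
          rw [hn₁.2] at this; exact this
        have habs := (hP1 _ _ hjE).2.2.1
        rw [block_col_div hk hy₁] at habs
        have hblk : R' (bi*k+x₁) (bj*k+y₁) ∈ blockSymsS k l r R bj := by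
          rw [he, hR'old _ hm₂]
          exact mem_blockSyms.mpr ⟨x₂, hxr₂, y₂, hy₂, by rw [hbieq]⟩
        exact (Finset.mem_sdiff.mp habs).2 hblk
      · -- both new
        have hm₁ : ¬ bi*k+x₁ < m := fun h => hxr₁ ((hrow x₁ hx₁).mp h)
        have hm₂ : ¬ bi*k+x₂ < m := fun h => hxr₂ ((hrow x₂ hx₂).mp h)
        have hn₁ := hnew (bi*k+x₁) (by omega) hr₁ (bj*k+y₁) hc₁
        have hn₂ := hnew (bi*k+x₂) (by omega) hr₂ (bj*k+y₂) hc₂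
        set s := R' (bi*k+x₁) (bj*k+y₁) with hs
        rw [← he] at hn₂
        have hsA : s ∈ Finset.Icc 1 (k^2) := hn₁.1
        have hjE₁ : bj*k+y₁ ∈ E s := by
          have := hσmem ((bi*k+x₁)-m) (hxlt _ (by omega) hr₁) s hsA
          rw [hn₁.2] at this; exact this
        have hjE₂ : bj*k+y₂ ∈ E s := by
          have := hσmem ((bi*k+x₂)-m) (hxlt _ (by omega) hr₂) s hsA
          rw [hn₂.2] at this; exact this
        -- same block column forces same cell
        have hy12 : y₁ = y₂ := by
          obtain ⟨b₁', hb₁', habs₁, hceq₁⟩ := (hmemE s _).mp hjE₁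
          obtain ⟨b₂', hb₂', habs₂, hceq₂⟩ := (hmemE s _).mp hjE₂
          have e₁ : b₁' = bj := by
            have := congrArg (·/k) hceq₁
            simp only [block_col_div hk hy₁, block_col_div hk (hgslt b₁' hb₁' s habs₁)] at this
            omega
          have e₂ : b₂' = bj := by
            have := congrArg (·/k) hceq₂
            simp only [block_col_div hk hy₂, block_col_div hk (hgslt b₂' hb₂' s habs₂)] at this
            omega
          subst e₁; subst e₂
          omega
        constructor
        · -- x₁ = x₂
          have hcc : bj*k+y₁ = bj*k+y₂ := by rw [hy12]
          have hσeq : σ ((bi*k+x₁)-m) s = σ ((bi*k+x₂)-m) s := by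
            rw [hn₁.2, hn₂.2, hcc]
          have := hσcol s hsA _ (hxlt _ (by omega) hr₁) _ (hxlt _ (by omega) hr₂) hσeq
          omega
        · exact hy12
end Part5

section Part6
open Finset

lemma complete_bands {k : ℕ} (d : ℕ) : ∀ t (R₀ : ℕ → ℕ → ℕ), t + d = k →
    IsSudokuRect k (t*k+0) R₀ →
    ∃ S, IsSudokuRect k (k*k) S ∧ ∀ i < t*k, ∀ j, S i j = R₀ i j := by
  induction d with
  | zero =>
    intro t R₀ ht hrect
    have htk : t = k := by omega
    subst htk
    exact ⟨R₀, by simpa using hrect, fun i _ j => rfl⟩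
  | succ d ih =>
    intro t R₀ ht hrect
    have htk : t < k := by omega
    obtain ⟨R', hR', hagree⟩ := extend_band htk (by omega : (0:ℕ) < k) hrect
      (fun b hb => hallB htk hrect hb)
    have hR'0 : IsSudokuRect k ((t+1)*k+0) R' := by rw [Nat.add_zero]; exact hR'
    obtain ⟨S, hS, hSagree⟩ := ih (t+1) R' (by omega) hR'0
    refine ⟨S, hS, fun i hi j => ?_⟩
    have h1 : S i j = R' i j := hSagree i (by nlinarith) j
    have h2 : R' i j = R₀ i j := hagree i (by omega) j
    rw [h1, h2]

theorem sudoku_rect_completable_of_ineq' (k l r : ℕ) (hl : l < k) (hr : r < k)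
    (hineq : l * k ≤ (k - r) * (k - l))
    (R : ℕ → ℕ → ℕ) (hR : IsSudokuRect k (l * k + r) R) :
    ∃ S : ℕ → ℕ → ℕ, CompletesTo k (l * k + r) R S := by
  have hk : 0 < k := by omega
  obtain ⟨R₁, hR₁, hagree₁⟩ := extend_band hl hr hR
    (fun b hb => hallA hl hr hineq hR hb)
  have hR₁0 : IsSudokuRect k ((l+1)*k+0) R₁ := by rw [Nat.add_zero]; exact hR₁
  obtain ⟨S, hS, hSagree⟩ := complete_bands (k-(l+1)) (l+1) R₁ (by omega) hR₁0
  have hkk : k*k = k^2 := (sq_eq k).symm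
  refine ⟨S, ⟨?_, ?_, ?_, ?_⟩, ?_⟩
  · intro i hi j hj
    exact hS.1 i (by omega) j hj
  · intro i hi j₁ hj₁ j₂ hj₂ he
    exact hS.2.1 i (by omega) j₁ hj₁ j₂ hj₂ he
  · intro j hj i₁ hi₁ i₂ hi₂ he
    exact hS.2.2.1 j hj i₁ (by omega) i₂ (by omega) he
  · intro bi hbi bj hbj x₁ hx₁ y₁ hy₁ x₂ hx₂ y₂ hy₂ he
    have hrow₁ : bi*k+x₁ < k*k := by
      have : (bi+1)*k ≤ k*k := Nat.mul_le_mul_right k (by omega)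
      nlinarith
    have hrow₂ : bi*k+x₂ < k*k := by
      have : (bi+1)*k ≤ k*k := Nat.mul_le_mul_right k (by omega)
      nlinarith
    exact hS.2.2.2 bi bj hbj x₁ hx₁ y₁ hy₁ x₂ hx₂ y₂ hy₂ hrow₁ hrow₂ he
  · intro i hi j hj
    have hlt : i < (l+1)*k := by nlinarith
    rw [hSagree i hlt j, hagree₁ i hi j]
end Part6

/-- If m = lk + r with 0 ≤ l < k, 0 ≤ r < k and (k−r)(k−l) ≥ lk, then every
m×k² Sudoku rectangle can be completed to a k²×k² Sudoku square. -/
theorem sudoku_rect_completable_of_ineq (k l r : ℕ) (hl : l < k) (hr : r < k)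
    (hineq : l * k ≤ (k - r) * (k - l))
    (R : ℕ → ℕ → ℕ) (hR : IsSudokuRect k (l * k + r) R) :
    ∃ S : ℕ → ℕ → ℕ, CompletesTo k (l * k + r) R S := by
  exact sudoku_rect_completable_of_ineq' k l r hl hr hineq R hR
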